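/- arXiv:1002.0391 — 3 statements merged into one kernel-verified Lean document; each statement's English description precedes it below -/
import Mathlib

section
/- Let (A,m) be a Noetherian local ring of dimension d ≥ 1, M a finitely generated A-module, and L a submodule of M with dim L ≤ dim M − 1 and Ass(M/L) ⊆ Assh(M). Then L equals the unmixed component U_M(0) of (0) in M. -/
open IsLocalRing Filter

section Prelim

variable (A : Type*) [CommRing A]

/-- The length of a module, as the Krull dimension (longest chain) of its submodule lattice. -/
noncomputable def moduleLength (M : Type*) [AddCommGroup M] [Module A M] : WithBot ℕ∞ :=
  Order.krullDim (Submodule A M)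

/-- The (Krull) dimension of a module, as the dimension of `A / ann M`. -/
noncomputable def moduleDim (M : Type*) [AddCommGroup M] [Module A M] : WithBot ℕ∞ :=
  ringKrullDim (A ⧸ Module.annihilator A M)

/-- `Q` is a parameter ideal of the `d`-dimensional Noetherian local ring `A`:
it is generated by a system of `d` parameters, i.e. it is generated by `d` elements,
is proper, and is `m`-primary. -/
def IsParameterIdeal [IsLocalRing A] (d : ℕ) (Q : Ideal A) : Prop :=
  (∃ f : Fin d → A, Q = Ideal.span (Set.range f)) ∧ Q ≤ maximalIdeal A ∧
    ∃ n : ℕ, maximalIdeal A ^ n ≤ Q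

/-- `e 0, …, e d` are the Hilbert coefficients of the `m`-primary ideal `Q`, i.e.
`ℓ_A(A/Q^{n+1}) = Σ_{i=0}^{d} (-1)^i e_i binom(n+d-i, d-i)` for all `n ≫ 0`. -/
def IsHilbertCoeffs (d : ℕ) (Q : Ideal A) (e : ℕ → ℤ) : Prop :=
  ∀ᶠ n : ℕ in atTop, ∃ L : ℕ,
    moduleLength A (A ⧸ Q ^ (n + 1)) = (L : ℕ∞) ∧
    (L : ℤ) = ∑ i ∈ Finset.range (d + 1),
      (-1) ^ i * e i * ((n + d - i).choose (d - i) : ℤ)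

/-- A Noetherian local ring is Cohen–Macaulay iff some system of parameters is a
regular sequence, iff its depth equals its dimension. -/
def IsCMLocalRing : Prop :=
  IsLocalRing A ∧ IsNoetherianRing A ∧ ∃ d : ℕ, ringKrullDim A = ((d : ℕ∞) : WithBot ℕ∞) ∧
    ∃ rs : List A, rs.length = d ∧ (∀ x ∈ rs, ¬ IsUnit x) ∧
      RingTheory.Sequence.IsRegular A rs

/-- The depth of a Noetherian local ring: the supremum of lengths of regular
sequences contained in the maximal ideal. -/
noncomputable def ringDepth [IsLocalRing A] : ℕ∞ :=
  sSup {n : ℕ∞ | ∃ rs : List A, (rs.length : ℕ∞) = n ∧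
    (∀ x ∈ rs, x ∈ maximalIdeal A) ∧ RingTheory.Sequence.IsRegular A rs}

variable (M : Type*) [AddCommGroup M] [Module A M]

/-- `Assh(M)`: associated primes `p` of `M` with `dim A/p = dim M`. -/
def Assh : Set (Ideal A) :=
  {p ∈ associatedPrimes A M | ringKrullDim (A ⧸ p) = moduleDim A M}

/-- The unmixed component `U_M(0)` of `(0)` in `M`: the intersection of the primary
components of `(0)` corresponding to the associated primes `p` with `dim A/p = dim M`;
equivalently, the intersection over such `p` of the kernels of `M → M_p`. -/
noncomputable def unmixedComponent : Submodule A M :=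
  ⨅ p : {p : Ideal A // p ∈ Assh A M},
    haveI : p.1.IsPrime := p.2.1.1
    LinearMap.ker (LocalizedModule.mkLinearMap p.1.primeCompl M)

/-- The unmixed local rings: `dim Â/p = dim A` for every associated prime `p`
of the completion `Â`. -/
def IsUnmixedLocalRing [IsLocalRing A] : Prop :=
  ∀ p ∈ associatedPrimes (AdicCompletion (maximalIdeal A) A)
      (AdicCompletion (maximalIdeal A) A),
    ringKrullDim (AdicCompletion (maximalIdeal A) A ⧸ p) = ringKrullDim A

/-- A Noetherian local ring `A` is a Vasconcelos ring if either `dim A = 0`, or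
`dim A > 0` and `e₁(Q) = 0` for some parameter ideal `Q` of `A`. -/
def IsVasconcelosRing : Prop :=
  ∃ (hl : IsLocalRing A) (d : ℕ), IsNoetherianRing A ∧ ringKrullDim A = ((d : ℕ∞) : WithBot ℕ∞) ∧
    (d = 0 ∨ ∃ (Q : Ideal A) (e : ℕ → ℤ),
      @IsParameterIdeal A _ _ d Q ∧ IsHilbertCoeffs A d Q e ∧ e 1 = 0)

end Prelim

/-- A submodule `L ⊆ M` with `dim L < dim M` and `Ass(M/L) ⊆ Assh(M)` is the unmixed
component of `(0)` in `M`. -/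
theorem stmt9 (A : Type*) [CommRing A] [IsLocalRing A] [IsNoetherianRing A]
    (d : ℕ) (hd : ringKrullDim A = ((d : ℕ∞) : WithBot ℕ∞)) (hdpos : 1 ≤ d)
    (M : Type*) [AddCommGroup M] [Module A M] [Module.Finite A M]
    (L : Submodule A M)
    (hL : moduleDim A L < moduleDim A M)
    (hAss : associatedPrimes A (M ⧸ L) ⊆ Assh A M) :
    L = unmixedComponent A M := by
  apply le_antisymm
  · -- L ⊆ U
    intro x hx
    rw [unmixedComponent, Submodule.mem_iInf]
    rintro ⟨p, hp⟩
    haveI : p.IsPrime := hp.1.1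
    by_cases hle : Module.annihilator A L ≤ p
    · exfalso
      have h1 : ringKrullDim (A ⧸ p) ≤ moduleDim A L := by
        unfold moduleDim
        refine ringKrullDim_le_of_surjective (Ideal.Quotient.factor hle) ?_
        intro y
        obtain ⟨a, rfl⟩ := Ideal.Quotient.mk_surjective y
        exact ⟨Ideal.Quotient.mk _ a, rfl⟩
      rw [hp.2] at h1
      exact absurd (lt_of_le_of_lt h1 hL) (lt_irrefl _)
    · obtain ⟨s, hsL, hsp⟩ := SetLike.not_le_iff_exists.mp hle
      simp only [LinearMap.mem_ker, LocalizedModule.mkLinearMap_apply]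
      have hsx : s • x = 0 := by
        have := Module.mem_annihilator.mp hsL (⟨x, hx⟩ : L)
        exact congrArg Subtype.val this
      rw [show (0 : LocalizedModule p.primeCompl M) = LocalizedModule.mk 0 1 from
        (LocalizedModule.zero_mk 1).symm, LocalizedModule.mk_eq]
      exact ⟨⟨s, hsp⟩, by simp [Submonoid.smul_def, hsx]⟩
  · -- U ⊆ L
    intro x hx
    by_contra hxL
    set xb : M ⧸ L := Submodule.Quotient.mk x with hxb
    have hxb0 : xb ≠ 0 := by
      simpa [hxb, Submodule.Quotient.mk_eq_zero] using hxL
    set N : Submodule A (M ⧸ L) := Submodule.span A {xb} with hN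
    haveI : Nontrivial N := by
      rw [Submodule.nontrivial_iff_ne_bot, hN, Ne, Submodule.span_singleton_eq_bot]
      exact hxb0
    obtain ⟨p, hp⟩ := associatedPrimes.nonempty A N
    have hpM : p ∈ associatedPrimes A (M ⧸ L) :=
      hp.map_of_injective N.subtype N.injective_subtype
    have hpA : p ∈ Assh A M := hAss hpM
    haveI : p.IsPrime := hp.1
    -- from x ∈ U, get u ∉ p with u • x = 0
    have hker : x ∈ LinearMap.ker (LocalizedModule.mkLinearMap p.primeCompl M) := by
      rw [unmixedComponent, Submodule.mem_iInf] at hx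
      exact hx ⟨p, hpA⟩
    simp only [LinearMap.mem_ker, LocalizedModule.mkLinearMap_apply] at hker
    rw [show (0 : LocalizedModule p.primeCompl M) = LocalizedModule.mk 0 1 from
      (LocalizedModule.zero_mk 1).symm, LocalizedModule.mk_eq] at hker
    obtain ⟨u, hu⟩ := hker
    have hux : (u : A) • x = 0 := by simpa [Submonoid.smul_def] using hu
    -- u kills xb, hence all of N, hence the witness of p
    obtain ⟨⟨z, hz⟩, hpz⟩ := hp.2
    have huz : (u : A) • z = 0 := by
      obtain ⟨a, ha⟩ := Submodule.mem_span_singleton.mp hz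
      rw [← ha, smul_comm, hxb, ← Submodule.Quotient.mk_smul, hux]
      simp
    have hup : (u : A) ∈ (Submodule.span A {(⟨z, hz⟩ : N)}).annihilator := by
      rw [Submodule.mem_annihilator_span_singleton]
      exact Subtype.ext huz
    exact u.2 (Eq.mpr (congrArg (fun I : Ideal A => (u : A) ∈ I) hpz) <| Ideal.le_radical (Submodule.mem_colon_singleton.mpr (Subtype.ext huz)))
end

section
/- A 1-dimensional Vasconcelos ring is Cohen–Macaulay; that is, if (A,m) is a Noetherian local ring of dimension 1 and e_1(Q) = 0 for some parameter ideal Q, then A is Cohen–Macaulay. -/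
open IsLocalRing Filter

namespace V10

open Order

section OrderLemmas

variable {α : Type*}

lemma head_add_length_le [Preorder α] :
    ∀ (n : ℕ) (p : LTSeries α), p.length = n →
      Order.height p.head + (n : ℕ∞) ≤ Order.height p.last := by
  intro n
  induction n with
  | zero =>
    intro p hp
    have h : p.head = p.last := by
      show p 0 = p (Fin.last _)
      congr 1
      ext
      simp [hp]
    rw [h, Nat.cast_zero, add_zero]
  | succ n ih =>
    intro p hp
    have hlen : p.eraseLast.length = n := by simp [hp]
    have h1 := ih p.eraseLast hlen
    rw [RelSeries.head_eraseLast] at h1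
    have hrel : p.eraseLast.last < p.last := p.eraseLast_last_rel_last (by omega)
    by_cases htop : Order.height p.last = ⊤
    · rw [htop]; exact le_top
    · have hfin : Order.height p.eraseLast.last ≠ ⊤ := by
        intro h
        exact htop (top_le_iff.mp (h ▸ Order.height_mono hrel.le))
      have h2 : Order.height p.eraseLast.last < Order.height p.last :=
        Order.height_strictMono hrel (lt_top_iff_ne_top.mpr hfin)
      have h3 := (ENat.add_one_le_iff hfin).mpr h2
      calc Order.height p.head + ((n + 1 : ℕ) : ℕ∞)
          = (Order.height p.head + (n : ℕ∞)) + 1 := by push_cast; ring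
        _ ≤ Order.height p.eraseLast.last + 1 := by gcongr
        _ ≤ _ := h3

lemma modular_chain_le [Lattice α] [IsModularLattice α] (N : α) :
    ∀ (n : ℕ) (p : LTSeries α), p.length = n →
      (n : ℕ∞) ≤ Order.height (⟨p.last ⊓ N, inf_le_right⟩ : {x : α // x ≤ N}) +
        Order.height (⟨p.last ⊔ N, le_sup_right⟩ : {x : α // N ≤ x}) := by
  intro n
  induction n with
  | zero => intro p _; simp
  | succ n ih =>
    intro p hp
    have hlen : p.eraseLast.length = n := by simp [hp]
    have h1 := ih p.eraseLast hlen
    have hxy : p.eraseLast.last < p.last := p.eraseLast_last_rel_last (by omega)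
    set x := p.eraseLast.last with hx
    set y := p.last with hy
    by_cases htop : Order.height (⟨y ⊓ N, inf_le_right⟩ : {x : α // x ≤ N}) +
        Order.height (⟨y ⊔ N, le_sup_right⟩ : {x : α // N ≤ x}) = ⊤
    · rw [htop]; exact le_top
    have hfin1 : Order.height (⟨y ⊓ N, inf_le_right⟩ : {x : α // x ≤ N}) ≠ ⊤ := by
      intro h; rw [h] at htop; simp at htop
    have hfin2 : Order.height (⟨y ⊔ N, le_sup_right⟩ : {x : α // N ≤ x}) ≠ ⊤ := by
      intro h; rw [h] at htop; simp at htop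
    have hle_inf : (⟨x ⊓ N, inf_le_right⟩ : {x : α // x ≤ N}) ≤ ⟨y ⊓ N, inf_le_right⟩ :=
      inf_le_inf_right _ hxy.le
    have hle_sup : (⟨x ⊔ N, le_sup_right⟩ : {x : α // N ≤ x}) ≤ ⟨y ⊔ N, le_sup_right⟩ :=
      sup_le_sup_right hxy.le _
    by_cases hinf : x ⊓ N = y ⊓ N
    · have hsup : x ⊔ N < y ⊔ N := sup_lt_sup_of_lt_of_inf_le_inf hxy hinf.ge
      have hsub : (⟨x ⊔ N, le_sup_right⟩ : {x : α // N ≤ x}) < ⟨y ⊔ N, le_sup_right⟩ := hsup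
      have hfin' : Order.height (⟨x ⊔ N, le_sup_right⟩ : {x : α // N ≤ x}) ≠ ⊤ := by
        intro h
        exact hfin2 (top_le_iff.mp (h ▸ Order.height_mono hle_sup))
      have h2 := (ENat.add_one_le_iff hfin').mpr
        (Order.height_strictMono hsub (lt_top_iff_ne_top.mpr hfin'))
      have hinfeq : (⟨x ⊓ N, inf_le_right⟩ : {x : α // x ≤ N}) = ⟨y ⊓ N, inf_le_right⟩ := by
        simpa using hinf
      calc ((n + 1 : ℕ) : ℕ∞) = (n : ℕ∞) + 1 := by push_cast; ring
        _ ≤ (Order.height (⟨x ⊓ N, inf_le_right⟩ : {x : α // x ≤ N}) +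
              Order.height (⟨x ⊔ N, le_sup_right⟩ : {x : α // N ≤ x})) + 1 := by gcongr
        _ = Order.height (⟨y ⊓ N, inf_le_right⟩ : {x : α // x ≤ N}) +
              (Order.height (⟨x ⊔ N, le_sup_right⟩ : {x : α // N ≤ x}) + 1) := by
            rw [hinfeq]; ring
        _ ≤ _ := by gcongr
    · have hinf' : x ⊓ N < y ⊓ N := lt_of_le_of_ne (inf_le_inf_right _ hxy.le) hinf
      have hsub : (⟨x ⊓ N, inf_le_right⟩ : {x : α // x ≤ N}) < ⟨y ⊓ N, inf_le_right⟩ := hinf'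
      have hfin' : Order.height (⟨x ⊓ N, inf_le_right⟩ : {x : α // x ≤ N}) ≠ ⊤ := by
        intro h
        exact hfin1 (top_le_iff.mp (h ▸ Order.height_mono hle_inf))
      have h2 := (ENat.add_one_le_iff hfin').mpr
        (Order.height_strictMono hsub (lt_top_iff_ne_top.mpr hfin'))
      calc ((n + 1 : ℕ) : ℕ∞) = (n : ℕ∞) + 1 := by push_cast; ring
        _ ≤ (Order.height (⟨x ⊓ N, inf_le_right⟩ : {x : α // x ≤ N}) +
              Order.height (⟨x ⊔ N, le_sup_right⟩ : {x : α // N ≤ x})) + 1 := by gcongr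
        _ = (Order.height (⟨x ⊓ N, inf_le_right⟩ : {x : α // x ≤ N}) + 1) +
              Order.height (⟨x ⊔ N, le_sup_right⟩ : {x : α // N ≤ x}) := by ring
        _ ≤ _ := by gcongr

lemma enat_add_le {a b c : ℕ∞} (h : ∀ m : ℕ, (m : ℕ∞) ≤ b → a + m ≤ c) : a + b ≤ c := by
  rcases eq_or_ne b ⊤ with rfl | hb
  · have hc : c = ⊤ := by
      by_contra hc
      lift c to ℕ using hc
      have h1 := h (c + 1) le_top
      have h2 : ((c + 1 : ℕ) : ℕ∞) ≤ (c : ℕ∞) := le_trans le_add_self h1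
      exact absurd (Nat.cast_le.mp h2) (by omega)
    rw [hc]; exact le_top
  · lift b to ℕ using hb
    exact h b le_rfl

lemma height_add_height_Ici_le [Preorder α] {a b : α} (hab : a ≤ b) :
    Order.height a + Order.height (⟨b, hab⟩ : {x : α // a ≤ x}) ≤ Order.height b := by
  apply enat_add_le
  intro m hm
  obtain ⟨q, hlast, hlen⟩ := Order.exists_series_of_le_height _ hm
  let q' : LTSeries α := q.map Subtype.val (fun _ _ h => h)
  have h1 := head_add_length_le q'.length q' rfl
  have hlen' : q'.length = m := hlen
  have hhead : a ≤ q'.head := by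
    have : q'.head = (q.head : α) := rfl
    rw [this]; exact q.head.2
  have hlast' : q'.last = b := by
    have : q'.last = (q.last : α) := rfl
    rw [this, hlast]
  calc Order.height a + (m : ℕ∞)
      ≤ Order.height q'.head + (q'.length : ℕ∞) := by
        rw [hlen']; gcongr
    _ ≤ Order.height q'.last := h1
    _ = Order.height b := by rw [hlast']

lemma height_subtype_le [Preorder α] {P : α → Prop} (x : {y : α // P y}) :
    Order.height x ≤ Order.height (x : α) :=
  Order.height_le_height_apply_of_strictMono (Subtype.val : {y : α // P y} → α) (fun _ _ h => h) x

end OrderLemmas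



section ModuleLength

variable (A : Type*) [Ring A]

/-- Length of a module as `ℕ∞`, via `height` of `⊤` in the submodule lattice. -/
noncomputable def lenN (M : Type*) [AddCommGroup M] [Module A M] : ℕ∞ :=
  Order.height (⊤ : Submodule A M)

variable {M M₂ : Type*} [AddCommGroup M] [Module A M] [AddCommGroup M₂] [Module A M₂]

lemma krullDim_submodule_eq (M : Type*) [AddCommGroup M] [Module A M] :
    Order.krullDim (Submodule A M) = ((lenN A M : ℕ∞) : WithBot ℕ∞) :=
  (Order.height_top_eq_krullDim).symm

variable {A}

lemma lenN_congr (e : M ≃ₗ[A] M₂) : lenN A M = lenN A M₂ := by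
  have h := Order.height_orderIso (Submodule.orderIsoMapComap e) ⊤
  have htop : Submodule.orderIsoMapComap e ⊤ = ⊤ := by
    show Submodule.map (e : M →ₗ[A] M₂) ⊤ = ⊤
    rw [Submodule.map_top, LinearMap.range_eq_top]
    exact e.surjective
  rw [htop] at h
  exact h.symm

lemma lenN_add (N : Submodule A M) : lenN A M = lenN A N + lenN A (M ⧸ N) := by
  -- transport tops through the two order isos
  have h1 : lenN A N = Order.height (⟨N, le_rfl⟩ : {p : Submodule A M // p ≤ N}) := by
    have := Order.height_orderIso (Submodule.MapSubtype.orderIso N) ⊤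
    have htop : (Submodule.MapSubtype.orderIso N) ⊤ = ⟨N, le_rfl⟩ := by
      apply Subtype.ext
      exact Submodule.map_subtype_top N
    rw [htop] at this
    exact this.symm
  have h2 : lenN A (M ⧸ N) = Order.height (⟨⊤, le_top⟩ : {p : Submodule A M // N ≤ p}) := by
    have := Order.height_orderIso (Submodule.comapMkQRelIso N) ⊤
    have htop : (Submodule.comapMkQRelIso N) ⊤ = ⟨⊤, Set.mem_Ici.mpr le_top⟩ := by
      apply Subtype.ext
      exact Submodule.comap_top _
    rw [htop] at this
    exact this.symm
  apply le_antisymm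
  · -- length M ≤ length N + length M/N
    apply Order.height_le
    intro p hp
    have h := V10.modular_chain_le N p.length p rfl
    rw [hp] at h
    have hi : (⟨(⊤ : Submodule A M) ⊓ N, inf_le_right⟩ : {p : Submodule A M // p ≤ N})
        = ⟨N, le_rfl⟩ := by simp
    have hs : (⟨(⊤ : Submodule A M) ⊔ N, le_sup_right⟩ : {p : Submodule A M // N ≤ p})
        = ⟨⊤, le_top⟩ := by simp
    rw [hi, hs] at h
    rw [h1, h2]
    exact h
  · calc lenN A N + lenN A (M ⧸ N)
        ≤ Order.height (N : Submodule A M) +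
            Order.height (⟨⊤, le_top⟩ : {p : Submodule A M // N ≤ p}) := by
          rw [h1, h2]
          gcongr
          exact V10.height_subtype_le _
      _ ≤ Order.height (⊤ : Submodule A M) := V10.height_add_height_Ici_le le_top
      _ = lenN A M := rfl

lemma lenN_eq_zero_iff : lenN A M = 0 ↔ Subsingleton M := by
  rw [lenN, Order.height_eq_zero]
  constructor
  · intro h
    have hbot : (⊤ : Submodule A M) ≤ ⊥ := h bot_le
    exact ⟨fun a b => by
      have ha : a ∈ (⊥ : Submodule A M) := hbot Submodule.mem_top
      have hb : b ∈ (⊥ : Submodule A M) := hbot Submodule.mem_top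
      rw [Submodule.mem_bot] at ha hb
      rw [ha, hb]⟩
  · intro h
    intro b _
    intro x _
    have : x = 0 := Subsingleton.elim x 0
    rw [this]; exact b.zero_mem

lemma lenN_surj (f : M →ₗ[A] M₂) (hf : Function.Surjective f) :
    lenN A M = lenN A (LinearMap.ker f) + lenN A M₂ := by
  rw [lenN_add (LinearMap.ker f)]
  congr 1
  exact lenN_congr (f.quotKerEquivOfSurjective hf)

lemma lenN_le_of_surj (f : M →ₗ[A] M₂) (hf : Function.Surjective f) :
    lenN A M₂ ≤ lenN A M := by
  rw [lenN_surj f hf]; exact le_add_self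

end ModuleLength

end V10

/-- A one-dimensional Vasconcelos ring is Cohen–Macaulay. -/
theorem stmt10 (A : Type*) [CommRing A] [IsLocalRing A] [IsNoetherianRing A]
    (hd : ringKrullDim A = ((1 : ℕ∞) : WithBot ℕ∞))
    (Q : Ideal A) (hQ : IsParameterIdeal A 1 Q)
    (e : ℕ → ℤ) (he : IsHilbertCoeffs A 1 Q e) (he1 : e 1 = 0) :
    IsCMLocalRing A := by
  obtain ⟨⟨f, hQf⟩, hQm, n₀, hn₀⟩ := hQ
  have hQa' : ∃ a : A, Q = Ideal.span {a} := by
    refine ⟨f 0, ?_⟩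
    rw [hQf]
    congr 1
    ext y
    simp only [Set.mem_range, Set.mem_singleton_iff]
    constructor
    · rintro ⟨i, rfl⟩; rw [Subsingleton.elim i 0]
    · rintro rfl; exact ⟨0, rfl⟩
  obtain ⟨a, hQa⟩ := hQa'
  have hQpow : ∀ k, Q ^ k = Ideal.span {a ^ k} := fun k => by
    rw [hQa, Ideal.span_singleton_pow]
  have haQ : a ∈ Q := by rw [hQa]; exact Ideal.mem_span_singleton_self a
  have ham : a ∈ maximalIdeal A := hQm haQ
  have hQtop : Q ≠ ⊤ := by
    intro h
    exact (Ideal.IsMaximal.ne_top (maximalIdeal.isMaximal A)) (top_le_iff.mp (h ▸ hQm))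
  -- the cyclic maps and colon ideals
  let φ : ∀ k : ℕ, A →ₗ[A] (A ⧸ Q ^ (k+1)) := fun k =>
    LinearMap.toSpanSingleton A _ (Submodule.mkQ (Q ^ (k+1)) (a ^ k))
  let K : ℕ → Ideal A := fun k => LinearMap.ker (φ k)
  have hKmem : ∀ k x, x ∈ K k ↔ x * a ^ k ∈ Q ^ (k+1) := by
    intro k x
    show φ k x = 0 ↔ _
    show LinearMap.toSpanSingleton A _ _ x = 0 ↔ _
    rw [LinearMap.toSpanSingleton_apply, ← map_smul, smul_eq_mul, Submodule.mkQ_apply]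
    exact Submodule.Quotient.mk_eq_zero _
  have hK0 : K 0 = Q := by
    ext x
    rw [hKmem 0 x]
    simp
  have hQK : ∀ k, Q ≤ K k := by
    intro k x hx
    rw [hKmem]
    rw [hQa, Ideal.mem_span_singleton'] at hx
    obtain ⟨y, rfl⟩ := hx
    rw [hQpow, Ideal.mem_span_singleton']
    exact ⟨y, by ring⟩
  have hKmono : ∀ k, K k ≤ K (k+1) := by
    intro k x hx
    rw [hKmem] at hx ⊢
    have hrw : x * a ^ (k+1) = (x * a ^ k) * a := by ring
    rw [hrw, pow_succ Q (k+1)]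
    exact Ideal.mul_mem_mul hx haQ
  have hKmono' : Monotone K := monotone_nat_of_le_succ hKmono
  let g : ℕ → ℕ∞ := fun k => V10.lenN A (A ⧸ Q ^ k)
  let q : ℕ → ℕ∞ := fun k => V10.lenN A (A ⧸ K k)
  -- additivity recursion
  have hR1 : ∀ k, g (k+1) = q k + g k := by
    intro k
    have hrange : LinearMap.range (φ k) = Submodule.map (Submodule.mkQ (Q^(k+1))) (Q ^ k) := by
      show LinearMap.range (LinearMap.toSpanSingleton A _ _) = _
      rw [← LinearMap.span_singleton_eq_range, hQpow k, ← Ideal.submodule_span_eq,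
        Submodule.map_span, Set.image_singleton]
    have hadd := V10.lenN_add (A := A) (M := A ⧸ Q^(k+1))
      (Submodule.map (Submodule.mkQ (Q^(k+1))) (Q ^ k))
    show V10.lenN A (A ⧸ Q ^ (k+1)) = V10.lenN A (A ⧸ K k) + V10.lenN A (A ⧸ Q ^ k)
    rw [hadd]
    congr 1
    · rw [← hrange]
      exact (V10.lenN_congr ((φ k).quotKerEquivRange)).symm
    · exact V10.lenN_congr
        (Submodule.quotientQuotientEquivQuotient (Q^(k+1)) (Q^k)
          (Ideal.pow_le_pow_right (by omega)))
  have hqmono : ∀ {I J : Ideal A}, I ≤ J → V10.lenN A (A ⧸ J) ≤ V10.lenN A (A ⧸ I) := by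
    intro I J hIJ
    apply V10.lenN_le_of_surj (Submodule.mapQ I J LinearMap.id (by rwa [Submodule.comap_id]))
    intro y
    obtain ⟨x, rfl⟩ := Submodule.mkQ_surjective J y
    exact ⟨Submodule.mkQ I x, by rw [Submodule.mkQ_apply, Submodule.mkQ_apply,
      Submodule.mapQ_apply, LinearMap.id_apply]⟩
  have hgmono : Monotone g := by
    apply monotone_nat_of_le_succ
    intro k
    rw [hR1 k]
    exact le_add_self
  have hqanti : Antitone q := fun i j hij => hqmono (hKmono' hij)
  -- extract the Hilbert polynomial data
  unfold IsHilbertCoeffs at he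
  rw [Filter.eventually_atTop] at he
  obtain ⟨N₀, hN₀⟩ := he
  have hlen : ∀ n, N₀ ≤ n → ∃ L : ℕ, g (n+1) = (L : ℕ∞) ∧ (L : ℤ) = e 0 * (n+1) := by
    intro n hn
    obtain ⟨L, h1, h2⟩ := hN₀ n hn
    refine ⟨L, ?_, ?_⟩
    · unfold moduleLength at h1
      rw [V10.krullDim_submodule_eq A (A ⧸ Q ^ (n+1))] at h1
      exact_mod_cast h1
    · rw [h2]
      rw [Finset.sum_range_succ, Finset.sum_range_one]
      simp [he1, Nat.choose_one_right]
  obtain ⟨L₀, hL₀, hL₀'⟩ := hlen N₀ le_rfl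
  have he0 : 0 ≤ e 0 := by
    nlinarith [hL₀', Int.natCast_nonneg L₀]
  have hEe : ((e 0).toNat : ℤ) = e 0 := Int.toNat_of_nonneg he0
  set E : ℕ := (e 0).toNat with hE
  have hg : ∀ n, N₀ ≤ n → g (n+1) = ((E * (n+1) : ℕ) : ℕ∞) := by
    intro n hn
    obtain ⟨L, h1, h2⟩ := hlen n hn
    rw [h1]
    have h3 : (L : ℤ) = ((E * (n+1) : ℕ) : ℤ) := by
      rw [h2, ← hEe]; push_cast; ring
    exact_mod_cast h3
  have hgfin : ∀ k, g k ≠ ⊤ := by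
    intro k
    have h1 : g k ≤ g (max k N₀ + 1) := hgmono (by omega)
    rw [hg (max k N₀) (le_max_right _ _)] at h1
    exact ne_top_of_le_ne_top (ENat.coe_ne_top _) h1
  have hq_le_g1 : ∀ k, q k ≤ g 1 := by
    intro k
    have h1 : V10.lenN A (A ⧸ K k) ≤ V10.lenN A (A ⧸ Q) := hqmono (hQK k)
    have h2 : g 1 = V10.lenN A (A ⧸ Q) := by
      show V10.lenN A (A ⧸ Q ^ 1) = _
      rw [pow_one]
    rw [h2]
    exact h1
  have hqfin : ∀ k, q k ≠ ⊤ := fun k =>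
    ne_top_of_le_ne_top (hgfin 1) (hq_le_g1 k)
  -- the colon lengths are eventually E
  have hA : ∀ n, N₀ ≤ n → q (n+1) = (E : ℕ∞) := by
    intro n hn
    have h1 := hR1 (n+1)
    rw [hg (n+1) (by omega), hg n hn] at h1
    have h2 : ((E * (n+1+1) : ℕ) : ℕ∞) = (E : ℕ∞) + ((E * (n+1) : ℕ) : ℕ∞) := by
      norm_cast; ring
    rw [h2] at h1
    exact (WithTop.add_right_cancel (ENat.coe_ne_top _) h1.symm)
  have hB : ∀ k, (E : ℕ∞) ≤ q k := by
    intro k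
    have h1 : q (max k N₀ + 1) ≤ q k := hqanti (by omega)
    rwa [hA (max k N₀) (le_max_right _ _)] at h1
  have hC1 : ∀ m, ((E * m : ℕ) : ℕ∞) ≤ g m := by
    intro m
    induction m with
    | zero => simp
    | succ m ih =>
      rw [hR1 m]
      calc ((E * (m+1) : ℕ) : ℕ∞) = (E : ℕ∞) + ((E * m : ℕ) : ℕ∞) := by norm_cast; ring
        _ ≤ q m + g m := add_le_add (hB m) ih
  have hC2 : ∀ k n, k ≤ n → q k + ((E * n : ℕ) : ℕ∞) ≤ g (n+1) := by
    intro k n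
    induction n with
    | zero =>
      intro hk
      have hk0 : k = 0 := by omega
      subst hk0
      rw [hR1 0]
      simp
    | succ n ih =>
      intro hk
      by_cases hkn : k ≤ n
      · have h1 := ih hkn
        rw [hR1 (n+1)]
        calc q k + ((E * (n+1) : ℕ) : ℕ∞)
            = (E : ℕ∞) + (q k + ((E * n : ℕ) : ℕ∞)) := by push_cast; ring
          _ ≤ q (n+1) + g (n+1) := add_le_add (hB (n+1)) h1
      · have hk1 : k = n + 1 := by omega
        subst hk1
        rw [hR1 (n+1)]
        exact add_le_add le_rfl (hC1 (n+1))
  have hC : ∀ k, q k = (E : ℕ∞) := by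
    intro k
    refine le_antisymm ?_ (hB k)
    have h1 := hC2 k (max k N₀) (le_max_left _ _)
    rw [hg (max k N₀) (le_max_right _ _)] at h1
    have h2 : ((E * (max k N₀ + 1) : ℕ) : ℕ∞)
        = (E : ℕ∞) + ((E * (max k N₀) : ℕ) : ℕ∞) := by norm_cast; ring
    rw [h2] at h1
    exact (WithTop.add_le_add_iff_right (ENat.coe_ne_top _)).mp (by
      calc q k + ((E * (max k N₀) : ℕ) : ℕ∞) ≤ _ := h1)
  -- conclude K k = Q
  have hKQ : ∀ k, K k ≤ Q := by
    intro k
    have hq0 : V10.lenN A (A ⧸ Q) = (E : ℕ∞) := by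
      have := hC 0
      show V10.lenN A (A ⧸ Q) = (E : ℕ∞)
      rw [← hK0]
      exact this
    have hψle : Q ≤ Submodule.comap LinearMap.id (K k) := by
      rw [Submodule.comap_id]; exact hQK k
    have hψ : Function.Surjective (Submodule.mapQ Q (K k) LinearMap.id hψle) := by
      intro y
      obtain ⟨x, rfl⟩ := Submodule.mkQ_surjective (K k) y
      exact ⟨Submodule.mkQ Q x, by rw [Submodule.mkQ_apply, Submodule.mkQ_apply,
        Submodule.mapQ_apply, LinearMap.id_apply]⟩
    have hsurj := V10.lenN_surj _ hψ
    rw [hq0] at hsurj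
    have hqk : V10.lenN A (A ⧸ K k) = (E : ℕ∞) := hC k
    rw [hqk] at hsurj
    have hker0 : V10.lenN A (LinearMap.ker (Submodule.mapQ Q (K k) LinearMap.id hψle)) = 0 := by
      have h0 : (0 : ℕ∞) + (E : ℕ∞)
          = V10.lenN A (LinearMap.ker (Submodule.mapQ Q (K k) LinearMap.id hψle)) + (E : ℕ∞) := by
        rw [zero_add]; exact hsurj
      exact (WithTop.add_right_cancel (ENat.coe_ne_top _) h0).symm
    have hsub := (V10.lenN_eq_zero_iff).mp hker0
    intro x hx
    have hxk : Submodule.mapQ Q (K k) LinearMap.id hψle (Submodule.Quotient.mk x) = 0 := by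
      rw [Submodule.mapQ_apply, LinearMap.id_apply]
      exact (Submodule.Quotient.mk_eq_zero _).mpr hx
    have hmem : (Submodule.Quotient.mk x : A ⧸ Q)
        ∈ LinearMap.ker (Submodule.mapQ Q (K k) LinearMap.id hψle) := LinearMap.mem_ker.mpr hxk
    have h0 : (⟨Submodule.Quotient.mk x, hmem⟩ :
        LinearMap.ker (Submodule.mapQ Q (K k) LinearMap.id hψle)) = 0 := Subsingleton.elim _ _
    have hx0 : (Submodule.Quotient.mk x : A ⧸ Q) = 0 := congrArg Subtype.val h0
    exact (Submodule.Quotient.mk_eq_zero _).mp hx0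
  -- a is a nonzerodivisor
  have hreg : ∀ x : A, a * x = 0 → x = 0 := by
    intro x hax
    have hall : ∀ k, x ∈ Q ^ k := by
      intro k
      induction k with
      | zero => rw [pow_zero, Ideal.one_eq_top]; trivial
      | succ k ih =>
        rw [hQpow k, Ideal.mem_span_singleton'] at ih
        obtain ⟨y, hy⟩ := ih
        have hyK : y ∈ K (k+1) := by
          rw [hKmem]
          have h0 : y * a ^ (k+1) = 0 := by
            calc y * a ^ (k+1) = (y * a ^ k) * a := by ring
              _ = x * a := by rw [hy]
              _ = 0 := by rw [mul_comm]; exact hax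
          rw [h0]
          exact zero_mem _
        have hyQ : y ∈ Q := hKQ (k+1) hyK
        rw [hQa, Ideal.mem_span_singleton'] at hyQ
        obtain ⟨z, hz⟩ := hyQ
        rw [hQpow (k+1), Ideal.mem_span_singleton']
        exact ⟨z, by rw [← hy, ← hz]; ring⟩
    have hx : x ∈ (⊥ : Ideal A) := by
      rw [← Ideal.iInf_pow_eq_bot_of_isLocalRing (I := Q) hQtop]
      exact (Submodule.mem_iInf _).mpr hall
    simpa using hx
  -- assemble Cohen–Macaulayness
  refine ⟨inferInstance, inferInstance, 1, by exact_mod_cast hd, [a], rfl, ?_, ?_, ?_⟩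
  · intro x hx
    have hxa : x = a := by simpa using hx
    subst hxa
    exact mem_nonunits_iff.mp ((IsLocalRing.mem_maximalIdeal x).mp ham)
  · constructor
    intro i hi
    simp only [List.length_singleton] at hi
    have hi0 : i = 0 := by omega
    subst hi0
    have hbot : (Ideal.ofList (List.take 0 [a]) • ⊤ : Submodule A A) = ⊥ := by
      simp
    have hreg' : IsSMulRegular A a := by
      intro u v huv
      have h0 : a * (u - v) = 0 := by
        have huv' : a * u = a * v := huv
        rw [mul_sub, huv', sub_self]
      have h1 := hreg _ h0
      exact sub_eq_zero.mp h1
    exact ((Submodule.quotEquivOfEqBot _ hbot).isSMulRegular_congr a).mpr hreg'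
  · intro htop
    have hsmul : Ideal.ofList [a] • (⊤ : Submodule A A) = Q := by
      rw [Ideal.ofList_singleton, ← hQa, Ideal.smul_eq_mul, Ideal.mul_top]
    rw [hsmul] at htop
    exact hQtop htop.symm
end

section
/- Let (A,m) be a Noetherian local ring of dimension d ≥ 2. Then A is a Vasconcelos ring if and only if A/H^0_m(A) is a Vasconcelos ring. -/
open IsLocalRing Filter

/-- `H⁰_m(A)`: the ideal of elements annihilated by a power of the maximal ideal. -/
noncomputable def zerothLocalCohomology (A : Type*) [CommRing A] [IsLocalRing A] : Ideal A :=
  ⨆ n : ℕ, Submodule.colon ⊥ ((IsLocalRing.maximalIdeal A ^ n : Ideal A) : Set A)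
section OrderPrelim

variable {α : Type*}

lemma my_height_add_one_le [Preorder α] {a b : α} (hab : a < b) :
    Order.height a + 1 ≤ Order.height b := by
  rw [Order.height_eq_iSup_lt_height b]
  exact le_iSup₂_of_le a hab le_rfl

lemma my_subtype_strictMono [Preorder α] {S : Set α} :
    StrictMono (fun (y : S) => (y : α)) := fun _ _ h => h

lemma my_krullDim_Iic [Preorder α] (x : α) :
    Order.krullDim (Set.Iic x) = (Order.height x : WithBot ℕ∞) := by
  have : Nonempty (Set.Iic x) := ⟨⟨x, le_rfl⟩⟩
  rw [Order.krullDim_eq_iSup_length, WithBot.coe_inj]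
  apply le_antisymm
  · apply iSup_le
    intro p
    have h := Order.length_le_height (p := p.map _ (my_subtype_strictMono (S := Set.Iic x)))
      (x := x) (by rw [LTSeries.last_map]; exact p.last.2)
    simpa using h
  · apply Order.height_le
    intro q hlast
    exact le_iSup_of_le
      ⟨q.length, fun i => ⟨q i, le_trans (q.monotone (Fin.le_last i)) hlast.le⟩,
        fun i => by change _ < _; exact Subtype.mk_lt_mk.mpr (q.step i)⟩ le_rfl

lemma my_coheight_add_one_le [Preorder α] {a b : α} (hab : a < b) :
    Order.coheight b + 1 ≤ Order.coheight a := by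
  rw [Order.coheight_eq_iSup_gt_coheight a]
  exact le_iSup₂_of_le b hab le_rfl

lemma my_krullDim_Ici [Preorder α] (x : α) :
    Order.krullDim (Set.Ici x) = (Order.coheight x : WithBot ℕ∞) := by
  have : Nonempty (Set.Ici x) := ⟨⟨x, le_rfl⟩⟩
  rw [Order.krullDim_eq_iSup_length, WithBot.coe_inj]
  apply le_antisymm
  · apply iSup_le
    intro p
    have h := Order.length_le_coheight (p := p.map _ (my_subtype_strictMono (S := Set.Ici x)))
      (x := x) (by rw [LTSeries.head_map]; exact p.head.2)
    simpa using h
  · apply Order.coheight_le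
    intro q hhead
    exact le_iSup_of_le
      ⟨q.length, fun i => ⟨q i, le_trans hhead.ge (q.monotone (Fin.zero_le i))⟩,
        fun i => by change _ < _; exact Subtype.mk_lt_mk.mpr (q.step i)⟩ le_rfl

lemma my_height_Iic [Preorder α] {x : α} (y : Set.Iic x) :
    Order.height y = Order.height (y : α) := by
  apply le_antisymm
  · apply Order.height_le
    intro p hp
    have h := Order.length_le_height (p := p.map _ (my_subtype_strictMono (S := Set.Iic x)))
      (x := (y : α)) (by simp [hp])
    simpa using h
  · apply Order.height_le
    intro q hq
    have h := Order.length_le_height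
      (p := (⟨q.length,
        fun i => (⟨q i, le_trans (le_trans (q.monotone (Fin.le_last i)) hq.le) y.2⟩ : Set.Iic x),
        fun i => by change _ < _; exact Subtype.mk_lt_mk.mpr (q.step i)⟩ : LTSeries (Set.Iic x)))
      (x := y) (by exact hq.le)
    simpa using h

lemma my_coheight_Ici [Preorder α] {x : α} (y : Set.Ici x) :
    Order.coheight y = Order.coheight (y : α) := by
  apply le_antisymm
  · apply Order.coheight_le
    intro p hp
    have h := Order.length_le_coheight (p := p.map _ (my_subtype_strictMono (S := Set.Ici x)))
      (x := (y : α)) (by simp [hp])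
    simpa using h
  · apply Order.coheight_le
    intro q hq
    have h := Order.length_le_coheight
      (p := (⟨q.length,
        fun i => (⟨q i, le_trans y.2 (le_trans hq.ge (q.monotone (Fin.zero_le i)))⟩ : Set.Ici x),
        fun i => by change _ < _; exact Subtype.mk_lt_mk.mpr (q.step i)⟩ : LTSeries (Set.Ici x)))
      (x := y) (by exact hq.ge)
    simpa using h

instance my_modular_Ici [Lattice α] [IsModularLattice α] (a : α) :
    IsModularLattice (Set.Ici a) where
  sup_inf_le_assoc_of_le := by
    intro x y z h
    exact IsModularLattice.sup_inf_le_assoc_of_le (α := α) (y : α) h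

instance my_modular_Iic [Lattice α] [IsModularLattice α] (a : α) :
    IsModularLattice (Set.Iic a) where
  sup_inf_le_assoc_of_le := by
    intro x y z h
    exact IsModularLattice.sup_inf_le_assoc_of_le (α := α) (y : α) h

end OrderPrelim
section OrderPrelim2

variable {α : Type*}

lemma my_krullDim_eq_height_add_coheight [Lattice α] [IsModularLattice α] (z : α) :
    Order.krullDim α = ((Order.height z + Order.coheight z : ℕ∞) : WithBot ℕ∞) := by
  have : Nonempty α := ⟨z⟩
  apply le_antisymm
  · rw [Order.krullDim_eq_iSup_length, WithBot.coe_le_coe]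
    apply iSup_le
    intro p
    have key : ∀ i : Fin (p.length + 1), ((i : ℕ) : ℕ∞) ≤
        Order.height (p i ⊓ z) +
          Order.height (α := Set.Ici z) ⟨p i ⊔ z, le_sup_right⟩ := by
      intro i
      induction i using Fin.induction with
      | zero => simp
      | succ i ih =>
        have hstep := p.step i
        have hcast : ((i.succ : Fin (p.length + 1)) : ℕ) = (i : ℕ) + 1 := by
          simp
        rcases (inf_le_inf_right z hstep.le).lt_or_eq with hlt | heq
        · have h1 := my_height_add_one_le hlt
          have h2 : Order.height (α := Set.Ici z) ⟨p i.castSucc ⊔ z, le_sup_right⟩ ≤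
              Order.height (α := Set.Ici z) ⟨p i.succ ⊔ z, le_sup_right⟩ :=
            Order.height_mono (by exact sup_le_sup_right hstep.le z)
          rw [hcast]
          push_cast
          calc ((i : ℕ) : ℕ∞) + 1
              ≤ (Order.height (p i.castSucc ⊓ z) +
                Order.height (α := Set.Ici z) ⟨p i.castSucc ⊔ z, le_sup_right⟩) + 1 :=
                add_le_add_left ih 1
            _ = (Order.height (p i.castSucc ⊓ z) + 1) +
                Order.height (α := Set.Ici z) ⟨p i.castSucc ⊔ z, le_sup_right⟩ := by
                rw [add_right_comm]
            _ ≤ _ := add_le_add h1 h2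
        · have hsup : p i.castSucc ⊔ z < p i.succ ⊔ z :=
            sup_lt_sup_of_lt_of_inf_le_inf hstep heq.ge
          have h1 : Order.height (p i.castSucc ⊓ z) ≤ Order.height (p i.succ ⊓ z) :=
            Order.height_mono (inf_le_inf_right z hstep.le)
          have h2 := my_height_add_one_le (α := Set.Ici z)
            (a := ⟨p i.castSucc ⊔ z, le_sup_right⟩) (b := ⟨p i.succ ⊔ z, le_sup_right⟩)
            (Subtype.mk_lt_mk.mpr hsup)
          rw [hcast]
          push_cast
          calc ((i : ℕ) : ℕ∞) + 1
              ≤ (Order.height (p i.castSucc ⊓ z) +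
                Order.height (α := Set.Ici z) ⟨p i.castSucc ⊔ z, le_sup_right⟩) + 1 :=
                add_le_add_left ih 1
            _ = Order.height (p i.castSucc ⊓ z) +
                (Order.height (α := Set.Ici z) ⟨p i.castSucc ⊔ z, le_sup_right⟩ + 1) := by
                rw [add_assoc]
            _ ≤ _ := add_le_add h1 h2
    have hlast := key (Fin.last _)
    have b1 : Order.height (p (Fin.last _) ⊓ z) ≤ Order.height z :=
      Order.height_mono inf_le_right
    have b2 : Order.height (α := Set.Ici z) ⟨p (Fin.last _) ⊔ z, le_sup_right⟩ ≤
        Order.coheight z := by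
      have h := Order.height_le_krullDim (α := Set.Ici z) ⟨p (Fin.last _) ⊔ z, le_sup_right⟩
      rw [my_krullDim_Ici] at h
      exact_mod_cast h
    calc (p.length : ℕ∞) = ((Fin.last p.length : ℕ) : ℕ∞) := by simp
      _ ≤ _ := hlast
      _ ≤ Order.height z + Order.coheight z := add_le_add b1 b2
  · rw [Order.krullDim_eq_iSup_height_add_coheight_of_nonempty, WithBot.coe_le_coe]
    exact le_iSup (fun a => Order.height a + Order.coheight a) z

lemma my_height_covBy [Lattice α] [IsModularLattice α] {x y : α} (h : x ⋖ y) :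
    Order.height y = Order.height x + 1 := by
  have h1 : Order.krullDim (Set.Iic y) = (Order.height y : WithBot ℕ∞) := my_krullDim_Iic y
  have h2 := my_krullDim_eq_height_add_coheight (α := Set.Iic y) ⟨x, h.le⟩
  have hco : Order.coheight (α := Set.Iic y) ⟨x, h.le⟩ = 1 := by
    have htop : Order.coheight (α := Set.Iic y) ⟨y, le_rfl⟩ = 0 :=
      Order.coheight_eq_zero.mpr (fun c _ => c.2)
    rw [Order.coheight_eq_iSup_gt_coheight]
    apply le_antisymm
    · apply iSup₂_le
      intro w hw
      have hwy : w = ⟨y, le_rfl⟩ := by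
        rcases w.2.lt_or_eq with hlt | heq
        · exact absurd hlt (h.2 hw)
        · exact Subtype.ext heq
      rw [hwy, htop]
      simp
    · refine le_iSup₂_of_le ⟨y, le_rfl⟩ (Subtype.mk_lt_mk.mpr h.lt) ?_
      rw [htop]
      simp
  have hht : Order.height (α := Set.Iic y) ⟨x, h.le⟩ = Order.height x := my_height_Iic _
  rw [hco, hht] at h2
  rw [h1] at h2
  exact_mod_cast h2

lemma my_krullDim_of_compositionSeries {R M : Type*} [Ring R] [AddCommGroup M] [Module R M]
    [IsNoetherian R M] [IsArtinian R M] :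
    ∃ c : ℕ, Order.krullDim (Submodule R M) = ((c : ℕ∞) : WithBot ℕ∞) := by
  obtain ⟨s, hhead, hlast⟩ := exists_compositionSeries_of_isNoetherian_isArtinian R M
  refine ⟨s.length, ?_⟩
  have key : ∀ i : Fin (s.length + 1), Order.height (s i) = ((i : ℕ) : ℕ∞) := by
    intro i
    induction i using Fin.induction with
    | zero =>
      have : s 0 = ⊥ := hhead
      rw [this]
      simp
    | succ i ih =>
      rw [my_height_covBy (s.step i), ih]
      simp
  have hfin := key (Fin.last _)
  rw [← Order.height_top_eq_krullDim]
  have : (⊤ : Submodule R M) = s (Fin.last _) := hlast.symm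
  rw [this, hfin]
  simp

lemma my_krullDim_Ici_add [Lattice α] [IsModularLattice α] {x y : α} (hxy : x ≤ y) :
    Order.krullDim (Set.Ici x) = Order.krullDim (Set.Icc x y) + Order.krullDim (Set.Ici y) := by
  have e : Set.Iic (⟨y, hxy⟩ : Set.Ici x) ≃o Set.Icc x y :=
    { toEquiv := Equiv.mk (fun a => ⟨a.1.1, ⟨a.1.2, a.2⟩⟩) (fun b => ⟨⟨b.1, b.2.1⟩, b.2.2⟩)
        (fun _ => rfl) (fun _ => rfl)
      map_rel_iff' := Iff.rfl }
  have h1 := my_krullDim_eq_height_add_coheight (α := Set.Ici x) ⟨y, hxy⟩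
  have h2 : Order.krullDim (Set.Icc x y) =
      (Order.height (α := Set.Ici x) ⟨y, hxy⟩ : WithBot ℕ∞) := by
    rw [← Order.krullDim_eq_of_orderIso e, my_krullDim_Iic]
  have h3 : Order.krullDim (Set.Ici y) =
      (Order.coheight (α := Set.Ici x) ⟨y, hxy⟩ : WithBot ℕ∞) := by
    rw [my_krullDim_Ici y, my_coheight_Ici]
  rw [h1, h2, h3, ← WithBot.coe_add]

end OrderPrelim2
section Tools

variable {A B : Type*} [CommRing A] [CommRing B]

/-- Transfer of the submodule lattice along a surjective ring hom. -/
def mySubmoduleIso (π : A →+* B) (hπ : Function.Surjective π) (M : Type*) [AddCommGroup M]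
    [Module A M] [Module B M] (hc : ∀ (a : A) (x : M), π a • x = a • x) :
    Submodule B M ≃o Submodule A M where
  toFun N :=
    { carrier := N
      add_mem' := fun h1 h2 => N.add_mem h1 h2
      zero_mem' := N.zero_mem
      smul_mem' := fun a x hx => by
        have : π a • x ∈ N := N.smul_mem _ hx
        rwa [hc] at this }
  invFun N :=
    { carrier := N
      add_mem' := fun h1 h2 => N.add_mem h1 h2
      zero_mem' := N.zero_mem
      smul_mem' := fun b x hx => by
        obtain ⟨a, rfl⟩ := hπ b
        rw [hc]
        exact N.smul_mem a hx }
  left_inv N := by apply SetLike.coe_injective; rfl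
  right_inv N := by apply SetLike.coe_injective; rfl
  map_rel_iff' := Iff.rfl

lemma myArtinian_base {A : Type*} [CommRing A] [IsLocalRing A] (M : Type*) [AddCommGroup M]
    [Module A M] [Module.Finite A M]
    (h : (IsLocalRing.maximalIdeal A) • (⊤ : Submodule A M) = ⊥) : IsArtinian A M := by
  have htor : Module.IsTorsionBySet A M (IsLocalRing.maximalIdeal A : Set A) := by
    intro x a
    have : (a : A) • x ∈ (⊥ : Submodule A M) := by
      rw [← h]
      exact Submodule.smul_mem_smul a.2 Submodule.mem_top
    simpa using this
  letI : Module (A ⧸ IsLocalRing.maximalIdeal A) M := htor.module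
  letI : Field (A ⧸ IsLocalRing.maximalIdeal A) :=
    Ideal.Quotient.field (IsLocalRing.maximalIdeal A)
  haveI : IsScalarTower A (A ⧸ IsLocalRing.maximalIdeal A) M := htor.isScalarTower
  haveI : Module.Finite (A ⧸ IsLocalRing.maximalIdeal A) M :=
    Module.Finite.of_restrictScalars_finite A _ M
  haveI hart : IsArtinian (A ⧸ IsLocalRing.maximalIdeal A) M := isArtinian_of_fg_of_artinian'
  have hc : ∀ (a : A) (x : M),
      (Ideal.Quotient.mk (IsLocalRing.maximalIdeal A) a) • x = a • x := fun a x =>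
    Module.IsTorsionBySet.mk_smul htor a x
  let e := mySubmoduleIso (Ideal.Quotient.mk (IsLocalRing.maximalIdeal A))
    Ideal.Quotient.mk_surjective M hc
  exact ⟨(e.symm.toOrderEmbedding.wellFounded hart.wf)⟩

lemma myArtinian_pow {A : Type*} [CommRing A] [IsLocalRing A] [IsNoetherianRing A] (k : ℕ) :
    ∀ (M : Type*) [AddCommGroup M] [Module A M] [Module.Finite A M],
      (IsLocalRing.maximalIdeal A) ^ k • (⊤ : Submodule A M) = ⊥ → IsArtinian A M := by
  induction k with
  | zero =>
    intro M _ _ _ h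
    rw [pow_zero, Ideal.one_eq_top, Submodule.top_smul] at h
    have : Subsingleton M := by
      constructor
      intro x y
      have hx : x ∈ (⊥ : Submodule A M) := h ▸ Submodule.mem_top
      have hy : y ∈ (⊥ : Submodule A M) := h ▸ Submodule.mem_top
      simp only [Submodule.mem_bot] at hx hy
      rw [hx, hy]
    infer_instance
  | succ k ih =>
    intro M _ _ _ h
    set m := IsLocalRing.maximalIdeal A
    set N : Submodule A M := m ^ k • ⊤ with hN
    -- M ⧸ N is killed by m ^ k
    haveI hq : IsArtinian A (M ⧸ N) := by
      apply ih
      rw [← Submodule.range_mkQ N, ← Submodule.map_top, ← Submodule.map_smul'']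
      exact eq_bot_iff.mpr (Submodule.map_le_iff_le_comap.mpr
        (by rw [Submodule.comap_bot, Submodule.ker_mkQ]))
    haveI hfgN : Module.Finite A N := Module.Finite.iff_fg.mpr (IsNoetherian.noetherian N)
    haveI hsub : IsArtinian A N := by
      apply myArtinian_base
      apply Submodule.map_injective_of_injective N.injective_subtype
      rw [Submodule.map_smul'', Submodule.map_top, Submodule.range_subtype, Submodule.map_bot]
      rw [hN, smul_smul, ← pow_succ']
      exact h
    exact isArtinian_of_range_eq_ker N.subtype N.mkQ
      (by rw [Submodule.range_subtype, Submodule.ker_mkQ])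

def mySubtypeIciIso {α : Type*} [Preorder α] (x : α) : {y : α // x ≤ y} ≃o Set.Ici x where
  toEquiv := Equiv.mk (fun a => ⟨a.1, a.2⟩) (fun a => ⟨a.1, a.2⟩) (fun _ => rfl) (fun _ => rfl)
  map_rel_iff' := Iff.rfl

def mySubtypeIicIso {α : Type*} [Preorder α] (x : α) : {y : α // y ≤ x} ≃o Set.Iic x where
  toEquiv := Equiv.mk (fun a => ⟨a.1, a.2⟩) (fun a => ⟨a.1, a.2⟩) (fun _ => rfl) (fun _ => rfl)
  map_rel_iff' := Iff.rfl

def myIccBotIso {α : Type*} [Preorder α] [OrderBot α] (a : α) :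
    Set.Icc (⊥ : α) a ≃o Set.Iic a where
  toEquiv := Equiv.mk (fun b => ⟨b.1, b.2.2⟩) (fun b => ⟨b.1, bot_le, b.2⟩)
    (fun _ => rfl) (fun _ => rfl)
  map_rel_iff' := Iff.rfl

/-- Ideals of `A ⧸ H` above `I'` correspond to ideals of `A` above `comap I'`. -/
def myIdealIciIso (H : Ideal A) (I' : Ideal (A ⧸ H)) :
    {J : Ideal (A ⧸ H) // I' ≤ J} ≃o Set.Ici (Ideal.comap (Ideal.Quotient.mk H) I') where
  toFun J := ⟨Ideal.comap (Ideal.Quotient.mk H) J.1, Ideal.comap_mono J.2⟩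
  invFun K := ⟨Ideal.map (Ideal.Quotient.mk H) K.1, by
    conv_lhs => rw [← Ideal.map_comap_of_surjective _ Ideal.Quotient.mk_surjective I']
    exact Ideal.map_mono K.2⟩
  left_inv J := by
    apply Subtype.ext
    exact Ideal.map_comap_of_surjective _ Ideal.Quotient.mk_surjective J.1
  right_inv K := by
    apply Subtype.ext
    show Ideal.comap (Ideal.Quotient.mk H) (Ideal.map (Ideal.Quotient.mk H) K.1) = K.1
    have h1 : Ideal.comap (Ideal.Quotient.mk H) (Ideal.map (Ideal.Quotient.mk H) K.1)
        = K.1 ⊔ H := by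
      rw [Ideal.comap_map_of_surjective _ Ideal.Quotient.mk_surjective,
        ← RingHom.ker_eq_comap_bot, Ideal.mk_ker]
    have h2 : H ≤ K.1 := by
      refine le_trans ?_ K.2
      intro x hx
      simp only [Ideal.mem_comap]
      rw [Ideal.Quotient.eq_zero_iff_mem.mpr hx]
      exact I'.zero_mem
    rw [h1, sup_eq_left.mpr h2]
  map_rel_iff' := by
    intro J1 J2
    constructor
    · intro h
      have h' : Ideal.comap (Ideal.Quotient.mk H) J1.1
          ≤ Ideal.comap (Ideal.Quotient.mk H) J2.1 := h
      have h2 := Ideal.map_mono (f := Ideal.Quotient.mk H) h'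
      rwa [Ideal.map_comap_of_surjective _ Ideal.Quotient.mk_surjective,
        Ideal.map_comap_of_surjective _ Ideal.Quotient.mk_surjective] at h2
    · exact fun h => Ideal.comap_mono h

lemma myModuleLength_quot (A : Type*) [CommRing A] (I : Ideal A) :
    moduleLength A (A ⧸ I) = Order.krullDim (Set.Ici I) := by
  unfold moduleLength
  exact Order.krullDim_eq_of_orderIso ((Submodule.comapMkQRelIso I).trans (mySubtypeIciIso I))

lemma myModuleLength_quot' (A : Type*) [CommRing A] (H : Ideal A) (I' : Ideal (A ⧸ H)) :
    moduleLength (A ⧸ H) ((A ⧸ H) ⧸ I')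
      = Order.krullDim (Set.Ici (Ideal.comap (Ideal.Quotient.mk H) I')) := by
  unfold moduleLength
  exact Order.krullDim_eq_of_orderIso ((Submodule.comapMkQRelIso I').trans (myIdealIciIso H I'))

lemma myLength_split {A : Type*} [CommRing A] (I H : Ideal A) (hdisj : I ⊓ H = ⊥) :
    Order.krullDim (Set.Ici I)
      = Order.krullDim (Set.Iic H) + Order.krullDim (Set.Ici (I ⊔ H)) := by
  rw [my_krullDim_Ici_add (le_sup_left : I ≤ I ⊔ H)]
  congr 1
  have h2 : Set.Icc I (I ⊔ H) = Set.Icc I (H ⊔ I) := by rw [sup_comm]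
  have h3 : Set.Icc (H ⊓ I) H = Set.Icc (⊥ : Ideal A) H := by rw [inf_comm, hdisj]
  rw [h2]
  rw [← Order.krullDim_eq_of_orderIso (infIccOrderIsoIccSup H I)]
  rw [h3]
  rw [Order.krullDim_eq_of_orderIso (myIccBotIso H)]

lemma myWithBot_extract (c L : ℕ) (x : WithBot ℕ∞)
    (h : ((c : ℕ∞) : WithBot ℕ∞) + x = ((L : ℕ∞) : WithBot ℕ∞)) :
    ∃ L' : ℕ, x = ((L' : ℕ∞) : WithBot ℕ∞) ∧ L = c + L' := by
  cases x with
  | bot => simp at h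
  | coe t =>
    rw [← WithBot.coe_add] at h
    have h' : (c : ℕ∞) + t = (L : ℕ∞) := WithBot.coe_inj.mp h
    induction t using ENat.recTopCoe with
    | top => simp at h'
    | coe L' =>
      refine ⟨L', rfl, ?_⟩
      exact_mod_cast h'.symm

lemma mySumShift (d : ℕ) (e : ℕ → ℤ) (t : ℤ) (n : ℕ) :
    ∑ i ∈ Finset.range (d + 1),
        (-1 : ℤ) ^ i * (if i = d then e d + (-1 : ℤ) ^ d * t else e i) *
          ((n + d - i).choose (d - i) : ℤ)
      = (∑ i ∈ Finset.range (d + 1),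
          (-1 : ℤ) ^ i * e i * ((n + d - i).choose (d - i) : ℤ)) + t := by
  have hd_mem : d ∈ Finset.range (d + 1) := by simp
  rw [← Finset.sum_erase_add _ _ hd_mem, ← Finset.sum_erase_add _ _ hd_mem]
  have hagree : ∀ i ∈ (Finset.range (d + 1)).erase d,
      (-1 : ℤ) ^ i * (if i = d then e d + (-1 : ℤ) ^ d * t else e i) *
          ((n + d - i).choose (d - i) : ℤ)
        = (-1 : ℤ) ^ i * e i * ((n + d - i).choose (d - i) : ℤ) := by
    intro i hi
    rw [if_neg (Finset.mem_erase.mp hi).1]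
  rw [Finset.sum_congr rfl hagree]
  have hbin : ((n + d - d).choose (d - d) : ℤ) = 1 := by simp
  rw [hbin, if_pos rfl]
  have h2 : ((-1 : ℤ) ^ d) * ((-1 : ℤ) ^ d) = 1 := by
    rw [← pow_add]
    exact Even.neg_one_pow ⟨d, rfl⟩
  have key : (-1 : ℤ) ^ d * (e d + (-1 : ℤ) ^ d * t) * 1 = (-1 : ℤ) ^ d * e d * 1 + t := by
    linear_combination t * h2
  rw [key]
  ring

end Tools
/-- For `d ≥ 2`, `A` is a Vasconcelos ring iff `A/H⁰_m(A)` is a Vasconcelos ring. -/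
theorem stmt11 (A : Type*) [CommRing A] [IsLocalRing A] [IsNoetherianRing A]
    (d : ℕ) (hd : ringKrullDim A = ((d : ℕ∞) : WithBot ℕ∞)) (hd2 : 2 ≤ d) :
    IsVasconcelosRing A ↔ IsVasconcelosRing (A ⧸ zerothLocalCohomology A) := by
  classical
  set H := zerothLocalCohomology A with hHdef
  set π := Ideal.Quotient.mk H with hπdef
  set m := IsLocalRing.maximalIdeal A with hmdef
  -- a power of `m` kills `H`
  have hkill : ∃ k : ℕ, m ^ (k + 1) * H = ⊥ := by
    obtain ⟨S, hS⟩ := IsNoetherian.noetherian H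
    have hmono : Monotone (fun n : ℕ => Submodule.colon (⊥ : Ideal A) ((m ^ n : Ideal A) : Set A)) := by
      intro a b hab
      exact Submodule.colon_mono le_rfl (Ideal.pow_le_pow_right hab)
    have hex : ∀ x ∈ (S : Set A), ∃ n : ℕ, x ∈ Submodule.colon (⊥ : Ideal A) ((m ^ n : Ideal A) : Set A) := by
      intro x hx
      have hxH : x ∈ H := hS ▸ Submodule.subset_span hx
      rw [hHdef, zerothLocalCohomology] at hxH
      exact (Submodule.mem_iSup_of_directed _ hmono.directed_le).mp hxH
    choose! nfun hnfun using hex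
    refine ⟨S.sup nfun, ?_⟩
    have hHcolon : H ≤ Submodule.colon (⊥ : Ideal A) ((m ^ (S.sup nfun) : Ideal A) : Set A) := by
      rw [← hS]
      apply Submodule.span_le.mpr
      intro x hx
      exact hmono (Finset.le_sup hx) (hnfun x hx)
    apply le_bot_iff.mp
    apply Ideal.mul_le.mpr
    intro r hr s hs
    have h1 : r ∈ m ^ (S.sup nfun) := Ideal.pow_le_pow_right (Nat.le_succ _) hr
    have h2 := Submodule.mem_colon.mp (hHcolon hs) r h1
    have : s * r ∈ (⊥ : Ideal A) := by simpa using h2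
    rwa [mul_comm] at this
  obtain ⟨k, hk⟩ := hkill
  -- `H ≤ m`
  have hHm : H ≤ m := by
    by_contra hc
    have hH1 : H = ⊤ := by
      by_contra hne
      exact hc (IsLocalRing.le_maximalIdeal hne)
    have hm0 : m ^ (k + 1) = ⊥ := by rwa [hH1, Ideal.mul_top] at hk
    have hsub : Subsingleton (PrimeSpectrum A) := by
      constructor
      intro p q
      have hp : m ≤ p.asIdeal := p.isPrime.le_of_pow_le (hm0 ▸ bot_le)
      have hq : m ≤ q.asIdeal := q.isPrime.le_of_pow_le (hm0 ▸ bot_le)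
      exact PrimeSpectrum.ext
        ((le_antisymm (IsLocalRing.le_maximalIdeal p.isPrime.ne_top) hp).trans
          (le_antisymm hq (IsLocalRing.le_maximalIdeal q.isPrime.ne_top)))
    have hle := Order.krullDim_nonpos_of_subsingleton (α := PrimeSpectrum A)
    rw [show Order.krullDim (PrimeSpectrum A) = ringKrullDim A from rfl, hd] at hle
    have : (d : ℕ) ≤ 0 := by exact_mod_cast hle
    omega
  have hHne : H ≠ ⊤ := fun h =>
    (IsLocalRing.maximalIdeal.isMaximal A).ne_top (top_le_iff.mp (h ▸ hHm))
  have hHp : ∀ p : Ideal A, p.IsPrime → H ≤ p := by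
    intro p hp
    have hle : m ^ (k + 1) * H ≤ p := le_trans (le_of_eq hk) bot_le
    rcases hp.mul_le.mp hle with h | h
    · exact hHm.trans (hp.le_of_pow_le h)
    · exact h
  haveI hnt' : Nontrivial (A ⧸ H) := Ideal.Quotient.nontrivial_iff.mpr hHne
  haveI hl' : IsLocalRing (A ⧸ H) :=
    IsLocalRing.of_surjective' π Ideal.Quotient.mk_surjective
  haveI hno' : IsNoetherianRing (A ⧸ H) := inferInstance
  set m' := IsLocalRing.maximalIdeal (A ⧸ H) with hm'def
  have hcommap : ∀ J : Ideal A, Ideal.comap π (Ideal.map π J) = J ⊔ H := by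
    intro J
    rw [Ideal.comap_map_of_surjective _ Ideal.Quotient.mk_surjective,
      ← RingHom.ker_eq_comap_bot, Ideal.mk_ker]
  have hcomle : Ideal.comap π m' ≤ m := by
    apply IsLocalRing.le_maximalIdeal
    intro htop
    have h1 : (1 : A) ∈ Ideal.comap π m' := htop ▸ Submodule.mem_top
    have h2 : (1 : A ⧸ H) ∈ m' := by simpa using h1
    exact (IsLocalRing.maximalIdeal.isMaximal _).ne_top ((Ideal.eq_top_iff_one _).mpr h2)
  have hmaple : Ideal.map π m ≤ m' := by
    apply IsLocalRing.le_maximalIdeal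
    intro htop
    have h1 : Ideal.comap π (Ideal.map π m) = ⊤ := by rw [htop, Ideal.comap_top]
    rw [hcommap, sup_eq_left.mpr hHm] at h1
    exact (IsLocalRing.maximalIdeal.isMaximal A).ne_top h1
  have hmax : m' = Ideal.map π m := by
    apply le_antisymm _ hmaple
    conv_lhs => rw [← Ideal.map_comap_of_surjective π Ideal.Quotient.mk_surjective m']
    exact Ideal.map_mono hcomle
  have hcomax : Ideal.comap π m' = m := by
    apply le_antisymm hcomle
    rw [hmax, hcommap]
    exact le_sup_left
  -- dimension of the quotient
  have hd' : ringKrullDim (A ⧸ H) = ((d : ℕ∞) : WithBot ℕ∞) := by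
    apply le_antisymm
    · rw [← hd]; exact ringKrullDim_quotient_le H
    · obtain ⟨p, hp⟩ : ∃ p : LTSeries (PrimeSpectrum A), d ≤ p.length := by
        by_contra hcon
        push_neg at hcon
        have hb : ∀ p : LTSeries (PrimeSpectrum A), (p.length : ℕ∞) ≤ ((d - 1 : ℕ) : ℕ∞) := by
          intro p
          exact_mod_cast Nat.le_sub_one_of_lt (hcon p)
        have hup : Order.krullDim (PrimeSpectrum A) ≤ (((d - 1 : ℕ) : ℕ∞) : WithBot ℕ∞) := by
          rw [Order.krullDim_eq_iSup_length, WithBot.coe_le_coe]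
          exact iSup_le hb
        rw [show Order.krullDim (PrimeSpectrum A) = ringKrullDim A from rfl, hd] at hup
        have : (d : ℕ) ≤ d - 1 := by exact_mod_cast hup
        omega
      have hfprime : ∀ P : PrimeSpectrum A, (Ideal.map π P.asIdeal).IsPrime := fun P =>
        Ideal.map_isPrime_of_surjective Ideal.Quotient.mk_surjective
          (by rw [Ideal.mk_ker]; exact hHp _ P.isPrime)
      let f : PrimeSpectrum A → PrimeSpectrum (A ⧸ H) := fun P =>
        ⟨Ideal.map π P.asIdeal, hfprime P⟩
      have hcomapP : ∀ P : PrimeSpectrum A, Ideal.comap π (Ideal.map π P.asIdeal) = P.asIdeal :=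
        fun P => by rw [hcommap, sup_eq_left.mpr (hHp _ P.isPrime)]
      have hf : StrictMono f := by
        intro P1 P2 h12
        have hle : Ideal.map π P1.asIdeal ≤ Ideal.map π P2.asIdeal :=
          Ideal.map_mono (le_of_lt h12)
        have hne : Ideal.map π P1.asIdeal ≠ Ideal.map π P2.asIdeal := by
          intro he
          have h1 : P1.asIdeal = P2.asIdeal := by
            rw [← hcomapP P1, he, hcomapP P2]
          exact h12.ne (PrimeSpectrum.ext h1)
        have hne' : f P1 ≠ f P2 := fun he => hne (congrArg PrimeSpectrum.asIdeal he)
        exact lt_of_le_of_ne hle hne'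
      have hne : Nonempty (PrimeSpectrum (A ⧸ H)) := inferInstance
      rw [show ringKrullDim (A ⧸ H) = Order.krullDim (PrimeSpectrum (A ⧸ H)) from rfl,
        Order.krullDim_eq_iSup_length, WithBot.coe_le_coe]
      refine le_trans ?_ (le_iSup (fun q : LTSeries (PrimeSpectrum (A ⧸ H)) => (q.length : ℕ∞))
        (p.map f hf))
      have hll : (p.map f hf).length = p.length := rfl
      rw [hll]
      exact_mod_cast hp
  -- finite length of `H`
  haveI hfinH : Module.Finite A ↥H := Module.Finite.iff_fg.mpr (IsNoetherian.noetherian H)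
  haveI hartH : IsArtinian A ↥H := by
    apply myArtinian_pow (k + 1)
    apply Submodule.map_injective_of_injective H.injective_subtype
    rw [Submodule.map_smul'', Submodule.map_top, Submodule.range_subtype, Submodule.map_bot,
      Ideal.smul_eq_mul, hk]
  obtain ⟨c, hc⟩ := my_krullDim_of_compositionSeries (R := A) (M := ↥H)
  have hIic : Order.krullDim (Set.Iic H) = ((c : ℕ∞) : WithBot ℕ∞) := by
    rw [← Order.krullDim_eq_of_orderIso ((Submodule.MapSubtype.orderIso H).trans
      (mySubtypeIicIso H))]
    exact hc
  -- the length splitting for powers of parameter ideals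
  have hsplitQ : ∀ Q : Ideal A, Q ≤ m → ∃ j0 : ℕ, ∀ j ≥ j0,
      Order.krullDim (Set.Ici (Q ^ j))
        = ((c : ℕ∞) : WithBot ℕ∞) + Order.krullDim (Set.Ici (Q ^ j ⊔ H)) := by
    intro Q hQm
    obtain ⟨r, hr⟩ := Ideal.exists_pow_inf_eq_pow_smul Q (H : Submodule A A)
    refine ⟨r + (k + 1), fun j hj => ?_⟩
    have hdisj : Q ^ j ⊓ H = ⊥ := by
      have h1 := hr j (le_trans (Nat.le_add_right r (k + 1)) hj)
      rw [Ideal.smul_eq_mul, Ideal.mul_top] at h1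
      apply le_bot_iff.mp
      rw [h1]
      calc Q ^ (j - r) • (Q ^ r * ⊤ ⊓ (H : Submodule A A))
          ≤ Q ^ (j - r) • (H : Submodule A A) :=
            Submodule.smul_mono le_rfl inf_le_right
        _ = Q ^ (j - r) * H := Ideal.smul_eq_mul _ _
        _ ≤ m ^ (k + 1) * H := Ideal.mul_mono_left
            ((Ideal.pow_right_mono hQm _).trans (Ideal.pow_le_pow_right (by omega)))
        _ = ⊥ := hk
    rw [myLength_split _ _ hdisj, hIic]
  constructor
  · rintro ⟨hl0, d0, hnoe0, hdim0, hor⟩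
    rw [hd] at hdim0
    have hd0 : d = d0 := by exact_mod_cast hdim0
    subst hd0
    rcases hor with h0 | ⟨Q, e, hparam, hhilb, he1⟩
    · exact absurd h0 (by omega)
    obtain ⟨⟨f, hfQ⟩, hQm, n0, hn0⟩ := hparam
    refine ⟨hl', d, hno', hd', Or.inr ⟨Ideal.map π Q,
      (fun i => if i = d then e d + (-1 : ℤ) ^ d * (-(c : ℤ)) else e i), ?_, ?_, ?_⟩⟩
    · refine ⟨⟨fun i => π (f i), ?_⟩, ?_, ⟨n0, ?_⟩⟩
      · rw [hfQ, Ideal.map_span, ← Set.range_comp]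
        rfl
      · exact le_trans (Ideal.map_mono hQm) hmax.ge
      · rw [show IsLocalRing.maximalIdeal (A ⧸ H) = Ideal.map π m from hmax, ← Ideal.map_pow]
        exact Ideal.map_mono hn0
    · obtain ⟨j0, hj0⟩ := hsplitQ Q hQm
      filter_upwards [Filter.eventually_ge_atTop j0, hhilb] with n hn hLn
      obtain ⟨L, hL1, hL2⟩ := hLn
      rw [myModuleLength_quot A _] at hL1
      have heq : ((c : ℕ∞) : WithBot ℕ∞) + Order.krullDim (Set.Ici (Q ^ (n + 1) ⊔ H))
          = ((L : ℕ∞) : WithBot ℕ∞) := by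
        rw [← hj0 (n + 1) (by omega), hL1]
      obtain ⟨L', hX, hLc⟩ := myWithBot_extract c L _ heq
      refine ⟨L', ?_, ?_⟩
      · rw [myModuleLength_quot' A H _,
          show Ideal.comap π ((Ideal.map π Q) ^ (n + 1)) = Q ^ (n + 1) ⊔ H from by
            rw [← Ideal.map_pow, hcommap]]
        exact hX
      · have hs := mySumShift d e (-(c : ℤ)) n
        rw [hs, ← hL2]
        have hcl : (L : ℤ) = (c : ℤ) + (L' : ℤ) := by exact_mod_cast hLc
        omega
    · have h1d : (1 : ℕ) ≠ d := by omega
      simp [h1d, he1]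
  · rintro ⟨hl0, d0, hnoe0, hdim0, hor⟩
    rw [hd'] at hdim0
    have hd0 : d = d0 := by exact_mod_cast hdim0
    subst hd0
    rcases hor with h0 | ⟨Q', e', hparam, hhilb, he1⟩
    · exact absurd h0 (by omega)
    obtain ⟨⟨f', hfQ'⟩, hQ'm, n0, hn0⟩ := hparam
    have hlift : ∀ i, ∃ a : A, π a = f' i := fun i => Ideal.Quotient.mk_surjective _
    choose f hf using hlift
    have hmapQ : Ideal.map π (Ideal.span (Set.range f)) = Q' := by
      rw [Ideal.map_span, ← Set.range_comp, show π ∘ f = f' from funext hf, hfQ']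
    set Q : Ideal A := Ideal.span (Set.range f) with hQdef
    have hQm : Q ≤ m := by
      rw [hQdef]
      apply Ideal.span_le.mpr
      rintro x ⟨i, rfl⟩
      have h1 : π (f i) ∈ m' := by
        rw [hf]
        exact hQ'm (hfQ' ▸ Ideal.subset_span ⟨i, rfl⟩)
      have h2 : f i ∈ Ideal.comap π m' := h1
      rwa [hcomax] at h2
    have hprim : m ^ (n0 + (k + 1)) ≤ Q := by
      have h1 : m ^ n0 ≤ Q ⊔ H := by
        intro x hx
        have h2 : π x ∈ m' ^ n0 := by
          rw [hmax, ← Ideal.map_pow]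
          exact Ideal.mem_map_of_mem _ hx
        have h3 : x ∈ Ideal.comap π Q' := hn0 h2
        rwa [← hmapQ, hcommap] at h3
      calc m ^ (n0 + (k + 1)) = m ^ (k + 1) * m ^ n0 := by rw [← pow_add, add_comm]
        _ ≤ m ^ (k + 1) * (Q ⊔ H) := Ideal.mul_mono_right h1
        _ = m ^ (k + 1) * Q ⊔ m ^ (k + 1) * H := by rw [Ideal.mul_sup]
        _ ≤ Q := by rw [hk, sup_bot_eq]; exact Ideal.mul_le_left (I := Q) (J := m ^ (k + 1)) |>.trans_eq' (mul_comm _ _)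
    refine ⟨inferInstance, d, inferInstance, hd, Or.inr ⟨Q,
      (fun i => if i = d then e' d + (-1 : ℤ) ^ d * (c : ℤ) else e' i),
      ⟨⟨f, hQdef⟩, hQm, ⟨n0 + (k + 1), hprim⟩⟩, ?_, ?_⟩⟩
    · obtain ⟨j0, hj0⟩ := hsplitQ Q hQm
      filter_upwards [Filter.eventually_ge_atTop j0, hhilb] with n hn hLn
      obtain ⟨L', hL1, hL2⟩ := hLn
      have hX : Order.krullDim (Set.Ici (Q ^ (n + 1) ⊔ H)) = ((L' : ℕ∞) : WithBot ℕ∞) := by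
        rw [← hL1, myModuleLength_quot' A H _,
          show Ideal.comap π (Q' ^ (n + 1)) = Q ^ (n + 1) ⊔ H from by
            rw [← hmapQ, ← Ideal.map_pow, hcommap]]
      refine ⟨c + L', ?_, ?_⟩
      · rw [myModuleLength_quot A _, hj0 (n + 1) (by omega), hX, ← WithBot.coe_add]
        norm_cast
      · have hs := mySumShift d e' ((c : ℤ)) n
        rw [hs, ← hL2]
        push_cast
        ring
    · have h1d : (1 : ℕ) ≠ d := by omega
      simp [h1d, he1]
end
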